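/- arXiv:1204.2530 — 2 statements merged into one kernel-verified Lean document; each statement's English description precedes it below -/
import Mathlib

section
/- The constant c_n = |B_2^n|^{(n-1)/n} / |B_2^{n-1}| satisfies c_n > 1/\sqrt{e} for every integer n \ge 2, where |B_2^k| denotes the volume of the k-dimensional Euclidean unit ball. -/
open MeasureTheory Filter Topology
open scoped Pointwise RealInnerProductSpace NNReal ENNReal

noncomputable section

/-- Euclidean space ℝ^n. -/
abbrev E (n : ℕ) := EuclideanSpace ℝ (Fin n)

/-- n-dimensional volume (Lebesgue measure), as a real number. -/
def vol {n : ℕ} (A : Set (E n)) : ℝ := (volume A).toReal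

/-- Volume of the k-dimensional Euclidean unit ball. -/
def ballVol (k : ℕ) : ℝ := (volume (Metric.closedBall (0 : E k) 1)).toReal

/-- The constant c_n = |B_2^n|^{(n-1)/n} / |B_2^{n-1}|. -/
def cc (n : ℕ) : ℝ := ballVol n ^ ((n - 1 : ℝ) / n) / ballVol (n - 1)

/-- Orthogonal projection onto the hyperplane ξ^⊥ (for ξ a unit vector). -/
def projMap {n : ℕ} (ξ : E n) : E n → E n := fun x => x - ⟪x, ξ⟫ • ξ

/-- The central hyperplane perpendicular to ξ. -/
def hyp {n : ℕ} (ξ : E n) : Set (E n) := {x | ⟪x, ξ⟫ = 0}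

/-- (n-1)-dimensional volume of the projection of L onto ξ^⊥,
computed via (n-1)-dimensional Hausdorff measure. -/
def projVol {n : ℕ} (L : Set (E n)) (ξ : E n) : ℝ :=
  (μH[(n - 1 : ℝ)] (projMap ξ '' L)).toReal

/-- Support function of a set. -/
def suppFn {n : ℕ} (L : Set (E n)) (θ : E n) : ℝ :=
  sSup ((fun y => ⟪y, θ⟫) '' L)

/-- The unit sphere S^{n-1}. -/
def sphere (n : ℕ) : Set (E n) := Metric.sphere 0 1

/-- Origin-symmetric convex body. -/
def IsSymConvexBody {n : ℕ} (K : Set (E n)) : Prop :=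
  IsCompact K ∧ Convex ℝ K ∧ (interior K).Nonempty ∧ K = -K

/-- L is a projection body: a convex body whose support function in every direction
θ ∈ S^{n-1} equals the volume of the hyperplane projection of some convex body M. -/
def IsProjectionBody {n : ℕ} (L : Set (E n)) : Prop :=
  IsCompact L ∧ Convex ℝ L ∧ (interior L).Nonempty ∧
  ∃ M : Set (E n), IsCompact M ∧ Convex ℝ M ∧ (interior M).Nonempty ∧
    ∀ θ ∈ sphere n, suppFn L θ = projVol M θ

-- log-convexity consequence
lemma gammaA {x : ℝ} (hx : 0 < x) :
    Real.Gamma (x + 1) ≤ Real.sqrt (x + 1/2) * Real.Gamma (x + 1/2) := by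
  have h1 : (0:ℝ) < x + 1/2 := by linarith
  have h2 : (0:ℝ) < x + 3/2 := by linarith
  have hG1 := Real.Gamma_pos_of_pos h1
  have hG2 := Real.Gamma_pos_of_pos h2
  have hG := Real.Gamma_pos_of_pos (show (0:ℝ) < x + 1 by linarith)
  have hc := Real.convexOn_log_Gamma.2 (Set.mem_Ioi.mpr h1) (Set.mem_Ioi.mpr h2)
    (by norm_num : (0:ℝ) ≤ 1/2) (by norm_num : (0:ℝ) ≤ 1/2) (by norm_num)
  simp only [smul_eq_mul, Function.comp_apply] at hc
  have hpt : (1/2 : ℝ) * (x + 1/2) + (1/2) * (x + 3/2) = x + 1 := by ring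
  rw [hpt] at hc
  have hb : Real.Gamma (x + 3/2) = (x + 1/2) * Real.Gamma (x + 1/2) := by
    rw [show x + 3/2 = (x + 1/2) + 1 by ring, Real.Gamma_add_one h1.ne']
  have hsq : Real.Gamma (x+1) * Real.Gamma (x+1) ≤
      (x + 1/2) * (Real.Gamma (x+1/2) * Real.Gamma (x+1/2)) := by
    have h2c : Real.log (Real.Gamma (x+1)) + Real.log (Real.Gamma (x+1)) ≤
        Real.log (Real.Gamma (x+1/2)) + Real.log (Real.Gamma (x+3/2)) := by linarith
    have := Real.exp_le_exp.mpr h2c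
    rw [Real.exp_add, Real.exp_add, Real.exp_log hG, Real.exp_log hG1, Real.exp_log hG2] at this
    calc Real.Gamma (x+1) * Real.Gamma (x+1)
        ≤ Real.Gamma (x+1/2) * Real.Gamma (x+3/2) := this
      _ = (x + 1/2) * (Real.Gamma (x+1/2) * Real.Gamma (x+1/2)) := by rw [hb]; ring
  calc Real.Gamma (x+1) = Real.sqrt (Real.Gamma (x+1) * Real.Gamma (x+1)) :=
        (Real.sqrt_mul_self hG.le).symm
    _ ≤ Real.sqrt ((x + 1/2) * (Real.Gamma (x+1/2) * Real.Gamma (x+1/2))) :=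
        Real.sqrt_le_sqrt hsq
    _ = Real.sqrt (x + 1/2) * Real.Gamma (x+1/2) := by
        rw [Real.sqrt_mul h1.le, Real.sqrt_mul_self hG1.le]

-- the induction step inequality
lemma stepIneq {b : ℝ} (hb : 2 ≤ b) :
    ((b+3)/(2*Real.exp 1)) ^ ((b+2)/2) ≤ ((b+2)/2) * (((b+1)/(2*Real.exp 1)) ^ (b/2)) := by
  have he : (0:ℝ) < Real.exp 1 := Real.exp_pos 1
  have hs : (0:ℝ) < (b+3)/(2*Real.exp 1) := by positivity
  have ht : (0:ℝ) < (b+1)/(2*Real.exp 1) := by positivity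
  have hb1 : (0:ℝ) < b + 1 := by linarith
  have h1 : ((b+3)/(2*Real.exp 1)) ^ ((b+2)/2)
      = ((b+3)/(2*Real.exp 1)) ^ (b/2) * ((b+3)/(2*Real.exp 1)) := by
    rw [show (b+2)/2 = b/2 + 1 by ring, Real.rpow_add_one hs.ne']
  have hst : (b+3)/(2*Real.exp 1) = (b+1)/(2*Real.exp 1) * ((b+3)/(b+1)) := by
    field_simp
  have h2 : ((b+3)/(2*Real.exp 1)) ^ (b/2)
      = ((b+1)/(2*Real.exp 1)) ^ (b/2) * ((b+3)/(b+1)) ^ (b/2) := by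
    rw [hst, Real.mul_rpow ht.le (by positivity)]
  have hlog : Real.log ((b+3)/(b+1)) ≤ 2/(b+1) := by
    have h := Real.log_le_sub_one_of_pos (show (0:ℝ) < (b+3)/(b+1) by positivity)
    have he2 : (b+3)/(b+1) - 1 = 2/(b+1) := by field_simp; ring
    linarith
  have h3 : ((b+3)/(b+1)) ^ (b/2) ≤ Real.exp (b/(b+1)) := by
    rw [Real.rpow_def_of_pos (by positivity)]
    apply Real.exp_le_exp.mpr
    have := mul_le_mul_of_nonneg_right hlog (show (0:ℝ) ≤ b/2 by linarith)
    calc Real.log ((b+3)/(b+1)) * (b/2) ≤ 2/(b+1) * (b/2) := this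
      _ = b/(b+1) := by field_simp
  have h5 : b + 3 ≤ Real.exp (1/(b+1)) * (b+2) := by
    have hexp := Real.add_one_le_exp (1/(b+1))
    have hmul : (1/(b+1) + 1) * (b+2) ≤ Real.exp (1/(b+1)) * (b+2) :=
      mul_le_mul_of_nonneg_right hexp (by linarith)
    have hexpand : (1/(b+1) + 1) * (b+2) = (b+2)/(b+1) + (b+2) := by ring
    have hge : (1:ℝ) ≤ (b+2)/(b+1) := by rw [le_div_iff₀ hb1]; linarith
    linarith
  have hu : Real.exp (b/(b+1)) = Real.exp 1 / Real.exp (1/(b+1)) := by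
    rw [eq_div_iff (Real.exp_ne_zero _), ← Real.exp_add]
    congr 1; field_simp
  have h4 : Real.exp (b/(b+1)) * ((b+3)/(2*Real.exp 1)) ≤ (b+2)/2 := by
    have heq : Real.exp (b/(b+1)) * ((b+3)/(2*Real.exp 1))
        = (b+3)/(2*Real.exp (1/(b+1))) := by
      rw [hu]; field_simp
    rw [heq, div_le_div_iff₀ (by positivity) (by norm_num)]
    nlinarith [h5, Real.exp_pos (1/(b+1))]
  have htp : (0:ℝ) ≤ ((b+1)/(2*Real.exp 1)) ^ (b/2) := (Real.rpow_pos_of_pos ht _).le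
  calc ((b+3)/(2*Real.exp 1)) ^ ((b+2)/2)
      = ((b+1)/(2*Real.exp 1)) ^ (b/2) * (((b+3)/(b+1)) ^ (b/2) * ((b+3)/(2*Real.exp 1))) := by
        rw [h1, h2]; ring
    _ ≤ ((b+1)/(2*Real.exp 1)) ^ (b/2) * (Real.exp (b/(b+1)) * ((b+3)/(2*Real.exp 1))) := by
        apply mul_le_mul_of_nonneg_left _ htp
        exact mul_le_mul_of_nonneg_right h3 hs.le
    _ ≤ ((b+1)/(2*Real.exp 1)) ^ (b/2) * ((b+2)/2) :=
        mul_le_mul_of_nonneg_left h4 htp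
    _ = ((b+2)/2) * (((b+1)/(2*Real.exp 1)) ^ (b/2)) := by ring

lemma keyB : ∀ n : ℕ, 2 ≤ n →
    (((n:ℝ)+1)/(2*Real.exp 1)) ^ ((n:ℝ)/2) < Real.Gamma ((n:ℝ)/2+1) := by
  intro n
  induction n using Nat.strong_induction_on with
  | _ n ih =>
    intro hn
    by_cases h4 : n < 4
    · interval_cases n
      · -- n = 2
        have he := Real.exp_one_gt_d9
        norm_num
        rw [div_lt_one (by positivity)]
        linarith
      · -- n = 3
        have he := Real.exp_one_gt_d9
        have hΓ : Real.Gamma (((3:ℕ):ℝ)/2+1) = 3/4 * Real.sqrt Real.pi := by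
          push_cast
          rw [show (3:ℝ)/2+1 = (3/2)+1 by norm_num, Real.Gamma_add_one (by norm_num),
              show (3:ℝ)/2 = (1/2)+1 by norm_num, Real.Gamma_add_one (by norm_num),
              Real.Gamma_one_half_eq]
          ring
        rw [hΓ]
        have hlt1 : (((3:ℕ):ℝ)+1)/(2*Real.exp 1) < 1 := by
          push_cast
          rw [div_lt_one (by positivity)]
          linarith
        have hs : Real.sqrt Real.pi ≥ 4/3 := by
          rw [ge_iff_le, show (4:ℝ)/3 = Real.sqrt ((4/3)^2) by rw [Real.sqrt_sq (by norm_num)]]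
          apply Real.sqrt_le_sqrt
          nlinarith [Real.pi_gt_three]
        have := Real.rpow_lt_one (by positivity) hlt1 (show (0:ℝ) < ((3:ℕ):ℝ)/2 by norm_num)
        nlinarith
    · push_neg at h4
      have hm2 : 2 ≤ n - 2 := by omega
      have hlt : n - 2 < n := by omega
      have IH := ih (n - 2) hlt hm2
      have hcast : ((n - 2 : ℕ) : ℝ) = (n:ℝ) - 2 := by
        rw [Nat.cast_sub (by omega)]; norm_num
      rw [hcast] at IH
      set b : ℝ := (n:ℝ) - 2 with hbdef
      have hb2 : (2:ℝ) ≤ b := by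
        have : (4:ℝ) ≤ (n:ℝ) := by exact_mod_cast h4
        simp [hbdef]; linarith
      have hΓ : Real.Gamma ((n:ℝ)/2+1) = ((b+2)/2) * Real.Gamma (b/2+1) := by
        have h1 : (n:ℝ)/2+1 = (b/2+1) + 1 := by simp [hbdef]; ring
        rw [h1, Real.Gamma_add_one (by positivity)]
        congr 1; ring
      have hL : (((n:ℝ)+1)/(2*Real.exp 1)) ^ ((n:ℝ)/2)
          = ((b+3)/(2*Real.exp 1)) ^ ((b+2)/2) := by
        congr 1 <;> simp [hbdef] <;> ring
      rw [hΓ, hL]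
      calc ((b+3)/(2*Real.exp 1)) ^ ((b+2)/2)
          ≤ ((b+2)/2) * (((b+1)/(2*Real.exp 1)) ^ (b/2)) := stepIneq hb2
        _ < ((b+2)/2) * Real.Gamma (b/2+1) := by
            apply mul_lt_mul_of_pos_left IH (by linarith)

lemma ballVol_eq (k : ℕ) (hk : 1 ≤ k) :
    ballVol k = Real.sqrt Real.pi ^ k / Real.Gamma ((k:ℝ)/2+1) := by
  haveI : Nonempty (Fin k) := ⟨⟨0, hk⟩⟩
  have hΓ : 0 < Real.Gamma ((k:ℝ)/2+1) := Real.Gamma_pos_of_pos (by positivity)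
  rw [ballVol, EuclideanSpace.volume_closedBall]
  simp only [Fintype.card_fin, ENNReal.ofReal_one, one_pow, one_mul]
  rw [ENNReal.toReal_ofReal (by positivity)]

theorem stmt0 : ∀ n : ℕ, 2 ≤ n → cc n > 1 / Real.sqrt (Real.exp 1) := by
  intro n hn
  have hn0 : (0:ℝ) < n := by exact_mod_cast Nat.lt_of_lt_of_le Nat.zero_lt_two hn
  have hn2 : (2:ℝ) ≤ n := by exact_mod_cast hn
  have hcast : ((n - 1 : ℕ) : ℝ) = (n:ℝ) - 1 := by
    rw [Nat.cast_sub (by omega)]; norm_num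
  have hG1 : 0 < Real.Gamma ((n:ℝ)/2 + 1/2) := Real.Gamma_pos_of_pos (by positivity)
  have hG2 : 0 < Real.Gamma ((n:ℝ)/2 + 1) := Real.Gamma_pos_of_pos (by positivity)
  set G1 := Real.Gamma ((n:ℝ)/2 + 1/2) with hG1def
  set G2 := Real.Gamma ((n:ℝ)/2 + 1) with hG2def
  have hbn : ballVol n = Real.sqrt Real.pi ^ n / G2 := ballVol_eq n (by omega)
  have hbn1 : ballVol (n-1) = Real.sqrt Real.pi ^ (n-1 : ℕ) / G1 := by
    rw [ballVol_eq (n-1) (by omega)]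
    congr 2
    rw [hcast]; ring
  have hsp : (0:ℝ) < Real.sqrt Real.pi ^ (n-1:ℕ) := by positivity
  have hcc : cc n = G1 / G2 ^ (((n:ℝ)-1)/n) := by
    rw [cc, hbn, hbn1, Real.div_rpow (by positivity) hG2.le]
    have hpow : (Real.sqrt Real.pi ^ n) ^ (((n:ℝ)-1)/(n:ℝ)) = Real.sqrt Real.pi ^ (n-1 : ℕ) := by
      rw [← Real.rpow_natCast (Real.sqrt Real.pi) n, ← Real.rpow_natCast (Real.sqrt Real.pi) (n-1),
          ← Real.rpow_mul (Real.sqrt_nonneg Real.pi)]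
      congr 1
      rw [hcast]
      field_simp
    rw [hpow, div_div_div_comm, div_self hsp.ne', one_div, inv_div]
  rw [gt_iff_lt, hcc]
  have hB : (((n:ℝ)+1)/(2*Real.exp 1)) ^ ((n:ℝ)/2) < G2 := keyB n hn
  have hBpos : (0:ℝ) < ((n:ℝ)+1)/(2*Real.exp 1) := by positivity
  have hroot : (((n:ℝ)+1)/(2*Real.exp 1)) ^ ((1:ℝ)/2) < G2 ^ ((1:ℝ)/n) := by
    have h1 := Real.rpow_lt_rpow (Real.rpow_pos_of_pos hBpos _).le hB
      (show (0:ℝ) < 1/n by positivity)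
    rwa [← Real.rpow_mul hBpos.le, show (n:ℝ)/2 * (1/n) = 1/2 by field_simp] at h1
  have hA : G2 ≤ Real.sqrt ((n:ℝ)/2 + 1/2) * G1 := by
    exact gammaA (show (0:ℝ) < (n:ℝ)/2 by positivity)
  rw [div_lt_div_iff₀ (Real.sqrt_pos.mpr (Real.exp_pos 1)) (Real.rpow_pos_of_pos hG2 _), one_mul,
      show ((n:ℝ)-1)/n = 1 - 1/n by field_simp, Real.rpow_sub hG2, Real.rpow_one]
  calc G2 / G2 ^ ((1:ℝ)/n)
      < G2 / (((n:ℝ)+1)/(2*Real.exp 1)) ^ ((1:ℝ)/2) := by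
        gcongr
    _ ≤ (Real.sqrt ((n:ℝ)/2 + 1/2) * G1) / (((n:ℝ)+1)/(2*Real.exp 1)) ^ ((1:ℝ)/2) := by
        gcongr
    _ = G1 * Real.sqrt (Real.exp 1) := by
        rw [show ((n:ℝ)+1)/(2*Real.exp 1) = ((n:ℝ)/2+1/2)/Real.exp 1 by field_simp,
            ← Real.sqrt_eq_rpow, Real.sqrt_div (by positivity) _]
        have h1 : Real.sqrt ((n:ℝ)/2+1/2) ≠ 0 := by positivity
        have h2 : Real.sqrt (Real.exp 1) ≠ 0 := by positivity
        field_simp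
end
end

section
/- Let K and L be convex bodies in \mathbb{R}^n. Then the first mixed volume V_1(K,L) := (1/n) \lim_{\varepsilon \to 0^+} (|K + \varepsilon L| - |K|)/\varepsilon satisfies V_1(K,L) \ge |K|^{(n-1)/n} |L|^{1/n} (Minkowski's first inequality). -/
open MeasureTheory Filter Topology
open scoped Pointwise RealInnerProductSpace NNReal ENNReal

noncomputable section

section BMaux
open MeasureTheory Filter Topology Set
open scoped Pointwise NNReal ENNReal

-- Step 1: 1-D compact sets
lemma oneDim_compact {A B : Set ℝ} (hA : IsCompact A) (hB : IsCompact B)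
    (hA0 : A.Nonempty) (hB0 : B.Nonempty) :
    volume A + volume B ≤ volume (A + B) := by
  set a := sSup A with ha
  set b := sInf B with hb
  have haA : a ∈ A := hA.sSup_mem hA0
  have hbB : b ∈ B := hB.sInf_mem hB0
  set S1 : Set ℝ := (fun x => x + b) '' A with hS1
  set S2 : Set ℝ := (fun y => a + y) '' B with hS2
  have hS1sub : S1 ⊆ A + B := by
    rintro _ ⟨x, hx, rfl⟩; exact Set.add_mem_add hx hbB
  have hS2sub : S2 ⊆ A + B := by
    rintro _ ⟨y, hy, rfl⟩; exact Set.add_mem_add haA hy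
  have hinter : S1 ∩ S2 ⊆ {a + b} := by
    rintro z ⟨⟨x, hx, rfl⟩, ⟨y, hy, hyz⟩⟩
    have h1 : x + b ≤ a + b := by
      have := le_csSup hA.bddAbove hx; linarith
    have h2 : a + b ≤ x + b := by
      have := csInf_le hB.bddBelow hy
      simp only at hyz
      rw [← hyz]; linarith
    simp [le_antisymm h1 h2]
  have hm2 : MeasurableSet S2 :=
    ((hB.image (continuous_const.add continuous_id)).isClosed).measurableSet
  have hv1 : volume S1 = volume A := by
    rw [hS1]
    have : (fun x => x + b) '' A = b +ᵥ A := by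
      rw [← Set.image_vadd]; exact Set.image_congr fun x _ => add_comm x b
    rw [this, measure_vadd]
  have hv2 : volume S2 = volume B := by
    rw [hS2]
    have : (fun y => a + y) '' B = a +ᵥ B := by rw [← Set.image_vadd]; rfl
    rw [this, measure_vadd]
  calc volume A + volume B = volume S1 + volume S2 := by rw [hv1, hv2]
    _ = volume (S1 ∪ S2) + volume (S1 ∩ S2) := (measure_union_add_inter S1 hm2).symm
    _ ≤ volume (A + B) + volume ({a + b} : Set ℝ) :=
        add_le_add (measure_mono (Set.union_subset hS1sub hS2sub)) (measure_mono hinter)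
    _ = volume (A + B) := by simp

-- Step 2: measurable nonempty sets
lemma oneDim_measurable {A B : Set ℝ} (hA : MeasurableSet A) (hB : MeasurableSet B)
    (hA0 : A.Nonempty) (hB0 : B.Nonempty) :
    volume A + volume B ≤ volume (A + B) := by
  obtain ⟨a0, ha0⟩ := hA0
  obtain ⟨b0, hb0⟩ := hB0
  -- translate trick for infinite cases
  have htransA : volume A ≤ volume (A + B) := by
    have : (fun x => x + b0) '' A ⊆ A + B := by
      rintro _ ⟨x, hx, rfl⟩; exact Set.add_mem_add hx hb0
    calc volume A = volume ((fun x => x + b0) '' A) := by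
          rw [show (fun x => x + b0) '' A = b0 +ᵥ A by
            rw [← Set.image_vadd]; exact Set.image_congr fun x _ => add_comm x b0,
            measure_vadd]
      _ ≤ _ := measure_mono this
  have htransB : volume B ≤ volume (A + B) := by
    have : (fun y => a0 + y) '' B ⊆ A + B := by
      rintro _ ⟨y, hy, rfl⟩; exact Set.add_mem_add ha0 hy
    calc volume B = volume ((fun y => a0 + y) '' B) := by
          rw [show (fun y => a0 + y) '' B = a0 +ᵥ B by rw [← Set.image_vadd]; rfl, measure_vadd]
      _ ≤ _ := measure_mono this
  rcases eq_or_ne (volume A) ∞ with hAinf | hAfin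
  · rw [hAinf] at htransA
    rw [top_le_iff.1 htransA]
    exact le_top
  rcases eq_or_ne (volume B) ∞ with hBinf | hBfin
  · rw [hBinf] at htransB
    rw [top_le_iff.1 htransB]
    exact le_top
  apply ENNReal.le_of_forall_pos_le_add
  intro ε hε _
  obtain ⟨K1, hK1sub, hK1c, hK1⟩ := hA.exists_isCompact_lt_add hAfin
    (ε := (ε : ℝ≥0∞) / 2) (by simp [hε.ne'])
  obtain ⟨K2, hK2sub, hK2c, hK2⟩ := hB.exists_isCompact_lt_add hBfin
    (ε := (ε : ℝ≥0∞) / 2) (by simp [hε.ne'])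
  have key : volume (K1 ∪ {a0}) + volume (K2 ∪ {b0}) ≤ volume (A + B) :=
    le_trans (oneDim_compact (hK1c.union isCompact_singleton) (hK2c.union isCompact_singleton)
        (by simp) (by simp))
      (measure_mono (Set.add_subset_add (Set.union_subset hK1sub (by simpa using ha0))
        (Set.union_subset hK2sub (by simpa using hb0))))
  have e1 : volume A ≤ volume (K1 ∪ {a0}) + ε / 2 :=
    le_trans hK1.le (add_le_add_left (measure_mono Set.subset_union_left) _)
  have e2 : volume B ≤ volume (K2 ∪ {b0}) + ε / 2 :=
    le_trans hK2.le (add_le_add_left (measure_mono Set.subset_union_left) _)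
  calc volume A + volume B ≤ (volume (K1 ∪ {a0}) + volume (K2 ∪ {b0})) + (ε/2 + ε/2) := by
        calc volume A + volume B ≤ (volume (K1 ∪ {a0}) + ε/2) + (volume (K2 ∪ {b0}) + ε/2) :=
              add_le_add e1 e2
          _ = _ := by ring
    _ ≤ volume (A + B) + ε := by
        rw [ENNReal.add_halves]; exact add_le_add_left key _

lemma volume_smul_real {c : ℝ} (hc : 0 ≤ c) (A : Set ℝ) :
    volume (c • A) = ENNReal.ofReal c * volume A := by
  rw [Measure.addHaar_smul_of_nonneg volume hc A]
  simp

-- Step 3: 1-D BM, convex-combination form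
lemma oneDim_combo {t : ℝ} (ht : t ∈ Set.Ioo (0:ℝ) 1) {A B : Set ℝ}
    (hA : MeasurableSet A) (hB : MeasurableSet B) (hA0 : A.Nonempty) (hB0 : B.Nonempty) :
    ENNReal.ofReal (1-t) * volume A + ENNReal.ofReal t * volume B
      ≤ volume ((1-t) • A + t • B) := by
  obtain ⟨ht0, ht1⟩ := ht
  have h1t : (0:ℝ) < 1 - t := by linarith
  have mA : MeasurableSet ((1-t) • A) := hA.const_smul₀ (1-t)
  have mB : MeasurableSet (t • B) := hB.const_smul₀ t
  calc ENNReal.ofReal (1-t) * volume A + ENNReal.ofReal t * volume B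
      = volume ((1-t) • A) + volume (t • B) := by
        rw [volume_smul_real h1t.le, volume_smul_real ht0.le]
    _ ≤ volume ((1-t) • A + t • B) :=
        oneDim_measurable mA mB (hA0.smul_set) (hB0.smul_set)

-- AM-GM in ENNReal
lemma ennreal_amgm {t : ℝ} (ht0 : 0 < t) (ht1 : t < 1) (a b : ℝ≥0∞) :
    a ^ (1-t) * b ^ t ≤ ENNReal.ofReal (1-t) * a + ENNReal.ofReal t * b := by
  have h1t : (0:ℝ) < 1 - t := by linarith
  rcases eq_or_ne a ∞ with rfl | ha
  · have h2 : ENNReal.ofReal (1-t) * ∞ = ∞ :=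
      ENNReal.mul_top (ENNReal.ofReal_pos.2 h1t).ne'
    rw [h2]; simp
  rcases eq_or_ne b ∞ with rfl | hb
  · have h2 : ENNReal.ofReal t * ∞ = ∞ :=
      ENNReal.mul_top (ENNReal.ofReal_pos.2 ht0).ne'
    rw [h2]; simp
  lift a to ℝ≥0 using ha
  lift b to ℝ≥0 using hb
  have hw : (1-t).toNNReal + t.toNNReal = 1 := by
    ext
    simp [Real.toNNReal_of_nonneg h1t.le, Real.toNNReal_of_nonneg ht0.le]
  have key := NNReal.geom_mean_le_arith_mean2_weighted (w₁ := (1-t).toNNReal)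
    (w₂ := t.toNNReal) (p₁ := a) (p₂ := b) hw
  have c1 : ((1-t).toNNReal : ℝ) = 1 - t := Real.coe_toNNReal _ h1t.le
  have c2 : (t.toNNReal : ℝ) = t := Real.coe_toNNReal _ ht0.le
  rw [c1, c2] at key
  calc (a:ℝ≥0∞) ^ (1-t) * (b:ℝ≥0∞) ^ t
      = ((a ^ (1-t) * b ^ t : ℝ≥0) : ℝ≥0∞) := by
        rw [ENNReal.coe_mul, ← ENNReal.coe_rpow_of_nonneg _ h1t.le,
          ← ENNReal.coe_rpow_of_nonneg _ ht0.le]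
    _ ≤ (((1-t).toNNReal * a + t.toNNReal * b : ℝ≥0) : ℝ≥0∞) :=
        ENNReal.coe_le_coe.2 key
    _ = ENNReal.ofReal (1-t) * a + ENNReal.ofReal t * b := by
        rw [ENNReal.coe_add, ENNReal.coe_mul, ENNReal.coe_mul]; rfl

-- change of variables on Ioi 0
lemma lintegral_Ioi_scale {c : ℝ} (hc : 0 < c) (φ : ℝ → ℝ≥0∞) (hφ : Measurable φ) :
    ∫⁻ u in Set.Ioi (0:ℝ), φ u = ENNReal.ofReal c * ∫⁻ r in Set.Ioi (0:ℝ), φ (c * r) := by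
  have hm : Measurable fun r : ℝ => c * r := measurable_const_mul c
  have hpre : (fun r : ℝ => c * r) ⁻¹' (Set.Ioi 0) = Set.Ioi 0 := by
    ext x; simp [Set.mem_Ioi, mul_pos_iff_of_pos_left, hc]
  have hmap : Measure.map (fun r : ℝ => c * r) (volume.restrict (Set.Ioi 0))
      = ENNReal.ofReal c⁻¹ • volume.restrict (Set.Ioi 0) := by
    rw [← hpre, ← Measure.restrict_map hm measurableSet_Ioi, Real.map_volume_mul_left hc.ne',
      abs_of_pos (inv_pos.2 hc), Measure.restrict_smul, hpre]
  calc ∫⁻ u in Set.Ioi (0:ℝ), φ u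
      = ENNReal.ofReal c * (ENNReal.ofReal c⁻¹ * ∫⁻ u in Set.Ioi (0:ℝ), φ u) := by
        rw [← mul_assoc, ← ENNReal.ofReal_mul hc.le, mul_inv_cancel₀ hc.ne', ENNReal.ofReal_one,
          one_mul]
    _ = ENNReal.ofReal c * ∫⁻ u, φ u ∂(Measure.map (fun r : ℝ => c * r)
          (volume.restrict (Set.Ioi 0))) := by rw [hmap, lintegral_smul_measure, smul_eq_mul]
    _ = ENNReal.ofReal c * ∫⁻ r in Set.Ioi (0:ℝ), φ (c * r) := by
        rw [lintegral_map hφ hm]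

lemma PL1_real {t : ℝ} (ht : t ∈ Set.Ioo (0:ℝ) 1) (f g h : ℝ → ℝ)
    (hf : Measurable f) (hg : Measurable g) (hh : Measurable h)
    (f_nn : ∀ x, 0 ≤ f x) (g_nn : ∀ x, 0 ≤ g x) (h_nn : ∀ x, 0 ≤ h x)
    {mf mg : ℝ} (hmf : 0 < mf) (hmg : 0 < mg)
    (hfle : ∀ x, f x ≤ mf) (hgle : ∀ x, g x ≤ mg)
    (hfs : ∀ u < mf, ∃ x, u < f x) (hgs : ∀ u < mg, ∃ x, u < g x)
    (hyp : ∀ x y, f x ^ (1-t) * g y ^ t ≤ h ((1-t) * x + t * y)) :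
    (∫⁻ x, ENNReal.ofReal (f x)) ^ (1-t) * (∫⁻ y, ENNReal.ofReal (g y)) ^ t
      ≤ ∫⁻ z, ENNReal.ofReal (h z) := by
  obtain ⟨ht0, ht1⟩ := ht
  have h1t : (0:ℝ) < 1 - t := by linarith
  set c : ℝ := mf ^ (1-t) * mg ^ t with hc_def
  have hc : 0 < c := mul_pos (Real.rpow_pos_of_pos hmf _) (Real.rpow_pos_of_pos hmg _)
  -- superlevel measure functions
  set φf : ℝ → ℝ≥0∞ := fun u => volume {x | u < f x} with hφf_def
  set φg : ℝ → ℝ≥0∞ := fun u => volume {x | u < g x} with hφg_def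
  set φh : ℝ → ℝ≥0∞ := fun u => volume {x | u < h x} with hφh_def
  have antif : Antitone φf := fun u v huv =>
    measure_mono (fun x hx => lt_of_le_of_lt huv hx)
  have antig : Antitone φg := fun u v huv =>
    measure_mono (fun x hx => lt_of_le_of_lt huv hx)
  have antih : Antitone φh := fun u v huv =>
    measure_mono (fun x hx => lt_of_le_of_lt huv hx)
  have mφf : Measurable φf := antif.measurable
  have mφg : Measurable φg := antig.measurable
  have mφh : Measurable φh := antih.measurable
  -- layer cake
  have layerf : ∫⁻ x, ENNReal.ofReal (f x) = ∫⁻ u in Set.Ioi (0:ℝ), φf u :=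
    lintegral_eq_lintegral_meas_lt volume (Eventually.of_forall f_nn) hf.aemeasurable
  have layerg : ∫⁻ x, ENNReal.ofReal (g x) = ∫⁻ u in Set.Ioi (0:ℝ), φg u :=
    lintegral_eq_lintegral_meas_lt volume (Eventually.of_forall g_nn) hg.aemeasurable
  have layerh : ∫⁻ x, ENNReal.ofReal (h x) = ∫⁻ u in Set.Ioi (0:ℝ), φh u :=
    lintegral_eq_lintegral_meas_lt volume (Eventually.of_forall h_nn) hh.aemeasurable
  -- rescaled integrals
  set F' : ℝ≥0∞ := ∫⁻ r in Set.Ioi (0:ℝ), φf (mf * r) with hF'_def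
  set G' : ℝ≥0∞ := ∫⁻ r in Set.Ioi (0:ℝ), φg (mg * r) with hG'_def
  have hF : ∫⁻ x, ENNReal.ofReal (f x) = ENNReal.ofReal mf * F' := by
    rw [layerf, lintegral_Ioi_scale hmf φf mφf]
  have hG : ∫⁻ x, ENNReal.ofReal (g x) = ENNReal.ofReal mg * G' := by
    rw [layerg, lintegral_Ioi_scale hmg φg mφg]
  -- pointwise superlevel inequality
  have key : ∀ r ∈ Set.Ioi (0:ℝ),
      ENNReal.ofReal (1-t) * φf (mf * r) + ENNReal.ofReal t * φg (mg * r) ≤ φh (c * r) := by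
    intro r hr
    rw [Set.mem_Ioi] at hr
    rcases lt_or_ge r 1 with hr1 | hr1
    · -- main case
      set A : Set ℝ := {x | mf * r < f x} with hA_def
      set B : Set ℝ := {x | mg * r < g x} with hB_def
      have hmA : MeasurableSet A := measurableSet_lt measurable_const hf
      have hmB : MeasurableSet B := measurableSet_lt measurable_const hg
      have hA0 : A.Nonempty := hfs _ (by nlinarith)
      have hB0 : B.Nonempty := hgs _ (by nlinarith)
      have hsub : (1-t) • A + t • B ⊆ {x | c * r < h x} := by
        rintro _ ⟨u, hu, v, hv, rfl⟩
        obtain ⟨x, hx, rfl⟩ := hu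
        obtain ⟨y, hy, rfl⟩ := hv
        have hx' : mf * r < f x := hx
        have hy' : mg * r < g y := hy
        have hfrpos : 0 < mf * r := mul_pos hmf hr
        have hgrpos : 0 < mg * r := mul_pos hmg hr
        have e1 : (mf * r) ^ (1-t) < f x ^ (1-t) :=
          Real.rpow_lt_rpow hfrpos.le hx' h1t
        have e2 : (mg * r) ^ t < g y ^ t :=
          Real.rpow_lt_rpow hgrpos.le hy' ht0
        have e3 : c * r = (mf * r) ^ (1-t) * ((mg * r) ^ t) := by
          rw [Real.mul_rpow hmf.le hr.le, Real.mul_rpow hmg.le hr.le]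
          have : r ^ (1-t) * r ^ t = r := by
            rw [← Real.rpow_add hr]; simp
          ring_nf
          nlinarith [this]
        have : c * r < f x ^ (1-t) * g y ^ t := by
          rw [e3]
          exact mul_lt_mul'' e1 e2 (Real.rpow_pos_of_pos hfrpos _).le
            (Real.rpow_pos_of_pos hgrpos _).le
        show c * r < h ((1-t) • x + t • y)
        calc c * r < f x ^ (1-t) * g y ^ t := this
          _ ≤ h ((1-t) * x + t * y) := hyp x y
      calc ENNReal.ofReal (1-t) * φf (mf * r) + ENNReal.ofReal t * φg (mg * r)
          ≤ volume ((1-t) • A + t • B) := oneDim_combo ⟨ht0, ht1⟩ hmA hmB hA0 hB0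
        _ ≤ φh (c * r) := measure_mono hsub
    · -- degenerate case r ≥ 1
      have hAe : {x | mf * r < f x} = ∅ := by
        ext x; simp only [Set.mem_setOf_eq, Set.mem_empty_iff_false, iff_false, not_lt]
        calc f x ≤ mf := hfle x
          _ ≤ mf * r := le_mul_of_one_le_right hmf.le hr1
      have hBe : {x | mg * r < g x} = ∅ := by
        ext x; simp only [Set.mem_setOf_eq, Set.mem_empty_iff_false, iff_false, not_lt]
        calc g x ≤ mg := hgle x
          _ ≤ mg * r := le_mul_of_one_le_right hmg.le hr1
      have : φf (mf * r) = 0 := by rw [hφf_def]; simp only [hAe]; simp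
      have h2 : φg (mg * r) = 0 := by rw [hφg_def]; simp only [hBe]; simp
      rw [this, h2]
      simp
  -- put everything together
  calc (∫⁻ x, ENNReal.ofReal (f x)) ^ (1-t) * (∫⁻ y, ENNReal.ofReal (g y)) ^ t
      = (ENNReal.ofReal mf * F') ^ (1-t) * (ENNReal.ofReal mg * G') ^ t := by rw [hF, hG]
    _ = ENNReal.ofReal c * (F' ^ (1-t) * G' ^ t) := by
        rw [ENNReal.mul_rpow_of_nonneg _ _ h1t.le, ENNReal.mul_rpow_of_nonneg _ _ ht0.le,
          ENNReal.ofReal_rpow_of_pos hmf, ENNReal.ofReal_rpow_of_pos hmg,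
          hc_def, ENNReal.ofReal_mul (Real.rpow_nonneg hmf.le _)]
        ring
    _ ≤ ENNReal.ofReal c * (ENNReal.ofReal (1-t) * F' + ENNReal.ofReal t * G') :=
        mul_le_mul_right (ennreal_amgm ht0 ht1 F' G') _
    _ = ENNReal.ofReal c * ∫⁻ r in Set.Ioi (0:ℝ),
          (ENNReal.ofReal (1-t) * φf (mf * r) + ENNReal.ofReal t * φg (mg * r)) := by
        rw [lintegral_add_left (by fun_prop), lintegral_const_mul _ (by fun_prop),
          lintegral_const_mul _ (by fun_prop)]
    _ ≤ ENNReal.ofReal c * ∫⁻ r in Set.Ioi (0:ℝ), φh (c * r) := by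
        exact mul_le_mul_right (setLIntegral_mono (by fun_prop) key) _
    _ = ∫⁻ z, ENNReal.ofReal (h z) := by
        rw [layerh, lintegral_Ioi_scale hc φh mφh]

-- bounded, ENNReal version
lemma PL1_bdd {t : ℝ} (ht : t ∈ Set.Ioo (0:ℝ) 1) (f g h : ℝ → ℝ≥0∞)
    (hf : Measurable f) (hg : Measurable g) (hh : Measurable h)
    {n m : ℕ} (hfn : ∀ x, f x ≤ n) (hgm : ∀ x, g x ≤ m)
    (hyp : ∀ x y, f x ^ (1-t) * g y ^ t ≤ h ((1-t) * x + t * y)) :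
    (∫⁻ x, f x) ^ (1-t) * (∫⁻ y, g y) ^ t ≤ ∫⁻ z, h z := by
  obtain ⟨ht0, ht1⟩ := ht
  have h1t : (0:ℝ) < 1 - t := by linarith
  set Mf : ℝ≥0∞ := ⨆ x, f x with hMf_def
  set Mg : ℝ≥0∞ := ⨆ x, g x with hMg_def
  have hMf_le : Mf ≤ n := iSup_le hfn
  have hMg_le : Mg ≤ m := iSup_le hgm
  have hMf_top : Mf ≠ ∞ := (lt_of_le_of_lt hMf_le (ENNReal.natCast_lt_top n)).ne
  have hMg_top : Mg ≠ ∞ := (lt_of_le_of_lt hMg_le (ENNReal.natCast_lt_top m)).ne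
  rcases eq_or_ne Mf 0 with hMf0 | hMf0
  · have : ∫⁻ x, f x = 0 := by
      have hzero : f = fun _ => 0 :=
        funext fun x => le_antisymm (le_trans (le_iSup f x) hMf0.le) zero_le
      rw [hzero]; simp
    rw [this, ENNReal.zero_rpow_of_pos h1t, zero_mul]
    exact zero_le
  rcases eq_or_ne Mg 0 with hMg0 | hMg0
  · have : ∫⁻ y, g y = 0 := by
      have hzero : g = fun _ => 0 :=
        funext fun x => le_antisymm (le_trans (le_iSup g x) hMg0.le) zero_le
      rw [hzero]; simp
    rw [this, ENNReal.zero_rpow_of_pos ht0, mul_zero]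
    exact zero_le
  set D : ℝ≥0∞ := Mf ^ (1-t) * Mg ^ t with hD_def
  have hD_top : D ≠ ∞ :=
    ENNReal.mul_ne_top (ENNReal.rpow_ne_top_of_nonneg h1t.le hMf_top)
      (ENNReal.rpow_ne_top_of_nonneg ht0.le hMg_top)
  set h' : ℝ → ℝ≥0∞ := fun z => min (h z) D with hh'_def
  have hh' : Measurable h' := hh.min measurable_const
  have hh'_top : ∀ z, h' z ≠ ∞ := fun z => (lt_of_le_of_lt (min_le_right _ _) hD_top.lt_top).ne
  have hf_top : ∀ x, f x ≠ ∞ := fun x => (lt_of_le_of_lt (hfn x) (ENNReal.natCast_lt_top n)).ne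
  have hg_top : ∀ y, g y ≠ ∞ := fun y => (lt_of_le_of_lt (hgm y) (ENNReal.natCast_lt_top m)).ne
  set fr : ℝ → ℝ := fun x => (f x).toReal with hfr_def
  set gr : ℝ → ℝ := fun y => (g y).toReal with hgr_def
  set hr : ℝ → ℝ := fun z => (h' z).toReal with hhr_def
  set mf : ℝ := Mf.toReal with hmf_def
  set mg : ℝ := Mg.toReal with hmg_def
  have hmf : 0 < mf := ENNReal.toReal_pos hMf0 hMf_top
  have hmg : 0 < mg := ENNReal.toReal_pos hMg0 hMg_top
  have hyp' : ∀ x y, f x ^ (1-t) * g y ^ t ≤ h' ((1-t) * x + t * y) := by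
    intro x y
    refine le_min (hyp x y) ?_
    exact mul_le_mul' (ENNReal.rpow_le_rpow (le_iSup f x) h1t.le)
      (ENNReal.rpow_le_rpow (le_iSup g y) ht0.le)
  have key := PL1_real ⟨ht0, ht1⟩ fr gr hr
    (hf.ennreal_toReal) (hg.ennreal_toReal) (hh'.ennreal_toReal)
    (fun x => ENNReal.toReal_nonneg) (fun y => ENNReal.toReal_nonneg)
    (fun z => ENNReal.toReal_nonneg) hmf hmg
    (fun x => ENNReal.toReal_mono hMf_top (le_iSup f x))
    (fun y => ENNReal.toReal_mono hMg_top (le_iSup g y))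
    (fun u hu => by
      rcases lt_or_ge u 0 with hu0 | hu0
      · exact ⟨0, lt_of_lt_of_le hu0 ENNReal.toReal_nonneg⟩
      · have : ENNReal.ofReal u < Mf := by
          rw [← ENNReal.ofReal_toReal hMf_top]
          exact ENNReal.ofReal_lt_ofReal_iff_of_nonneg hu0 |>.2 hu
        obtain ⟨x, hx⟩ := lt_iSup_iff.1 this
        exact ⟨x, by
          have := ENNReal.toReal_strict_mono (hf_top x) hx
          rwa [ENNReal.toReal_ofReal hu0] at this⟩)
    (fun u hu => by
      rcases lt_or_ge u 0 with hu0 | hu0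
      · exact ⟨0, lt_of_lt_of_le hu0 ENNReal.toReal_nonneg⟩
      · have : ENNReal.ofReal u < Mg := by
          rw [← ENNReal.ofReal_toReal hMg_top]
          exact ENNReal.ofReal_lt_ofReal_iff_of_nonneg hu0 |>.2 hu
        obtain ⟨y, hy⟩ := lt_iSup_iff.1 this
        exact ⟨y, by
          have := ENNReal.toReal_strict_mono (hg_top y) hy
          rwa [ENNReal.toReal_ofReal hu0] at this⟩)
    (fun x y => by
      have h1 := hyp' x y
      have : (f x ^ (1-t) * g y ^ t).toReal = fr x ^ (1-t) * gr y ^ t := by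
        rw [ENNReal.toReal_mul, ← ENNReal.toReal_rpow, ← ENNReal.toReal_rpow]
      rw [← this]
      exact ENNReal.toReal_mono (hh'_top _) h1)
  have ef : ∫⁻ x, ENNReal.ofReal (fr x) = ∫⁻ x, f x :=
    lintegral_congr fun x => ENNReal.ofReal_toReal (hf_top x)
  have eg : ∫⁻ y, ENNReal.ofReal (gr y) = ∫⁻ y, g y :=
    lintegral_congr fun y => ENNReal.ofReal_toReal (hg_top y)
  have eh : ∫⁻ z, ENNReal.ofReal (hr z) ≤ ∫⁻ z, h z := by
    rw [lintegral_congr fun z => ENNReal.ofReal_toReal (hh'_top z)]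
    exact lintegral_mono fun z => min_le_left _ _
  rw [ef, eg] at key
  exact le_trans key eh

lemma iSup_min_natCast (a : ℝ≥0∞) : ⨆ n : ℕ, min a n = a := by
  apply le_antisymm (iSup_le fun n => min_le_left _ _)
  rcases eq_or_ne a ∞ with rfl | ha
  · calc ∞ = ⨆ n : ℕ, (n : ℝ≥0∞) := (ENNReal.iSup_natCast).symm
      _ ≤ ⨆ n : ℕ, min ∞ (n : ℝ≥0∞) := by simp
  · obtain ⟨n, hn⟩ := ENNReal.exists_nat_gt ha.lt_top.ne
    calc a = min a n := (min_eq_left hn.le).symm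
      _ ≤ ⨆ n : ℕ, min a n := le_iSup (fun n : ℕ => min a (n:ℝ≥0∞)) n

-- full 1-D Prékopa–Leindler
lemma PL_dim1 {t : ℝ} (ht : t ∈ Set.Ioo (0:ℝ) 1) (f g h : ℝ → ℝ≥0∞)
    (hf : Measurable f) (hg : Measurable g) (hh : Measurable h)
    (hyp : ∀ x y, f x ^ (1-t) * g y ^ t ≤ h ((1-t) * x + t * y)) :
    (∫⁻ x, f x) ^ (1-t) * (∫⁻ y, g y) ^ t ≤ ∫⁻ z, h z := by
  obtain ⟨ht0, ht1⟩ := ht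
  have h1t : (0:ℝ) < 1 - t := by linarith
  set fn : ℕ → ℝ → ℝ≥0∞ := fun n x => min (f x) n with hfn_def
  set gn : ℕ → ℝ → ℝ≥0∞ := fun n y => min (g y) n with hgn_def
  have hfnm : ∀ n, Measurable (fn n) := fun n => hf.min measurable_const
  have hgnm : ∀ n, Measurable (gn n) := fun n => hg.min measurable_const
  have monof : Monotone fn := fun n m hnm x =>
    min_le_min le_rfl (by exact_mod_cast Nat.cast_le.2 hnm)
  have monog : Monotone gn := fun n m hnm x =>
    min_le_min le_rfl (by exact_mod_cast Nat.cast_le.2 hnm)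
  have hFsup : ∫⁻ x, f x = ⨆ n, ∫⁻ x, fn n x := by
    rw [← lintegral_iSup hfnm monof]
    congr 1; ext x
    exact (iSup_min_natCast (f x)).symm
  have hGsup : ∫⁻ y, g y = ⨆ n, ∫⁻ y, gn n y := by
    rw [← lintegral_iSup hgnm monog]
    congr 1; ext y
    exact (iSup_min_natCast (g y)).symm
  -- per-level inequality
  have claim : ∀ n : ℕ, (∫⁻ x, fn n x) ^ (1-t) * (∫⁻ y, gn n y) ^ t ≤ ∫⁻ z, h z := by
    intro n
    apply PL1_bdd ⟨ht0, ht1⟩ (fn n) (gn n) h (hfnm n) (hgnm n) hh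
      (n := n) (m := n) (fun x => min_le_right _ _) (fun y => min_le_right _ _)
    intro x y
    refine le_trans ?_ (hyp x y)
    exact mul_le_mul' (ENNReal.rpow_le_rpow (min_le_left _ _) h1t.le)
      (ENNReal.rpow_le_rpow (min_le_left _ _) ht0.le)
  -- pass to the limit
  have monoF : Monotone fun n => ∫⁻ x, fn n x := fun n m hnm =>
    lintegral_mono fun x => monof hnm x
  have monoG : Monotone fun n => ∫⁻ y, gn n y := fun n m hnm =>
    lintegral_mono fun y => monog hnm y
  have tF : Tendsto (fun n => ∫⁻ x, fn n x) atTop (𝓝 (∫⁻ x, f x)) := by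
    rw [hFsup]; exact tendsto_atTop_iSup monoF
  have tG : Tendsto (fun n => ∫⁻ y, gn n y) atTop (𝓝 (∫⁻ y, g y)) := by
    rw [hGsup]; exact tendsto_atTop_iSup monoG
  rcases eq_or_ne (∫⁻ x, f x) 0 with hF0 | hF0
  · rw [hF0, ENNReal.zero_rpow_of_pos h1t, zero_mul]; exact zero_le
  rcases eq_or_ne (∫⁻ y, g y) 0 with hG0 | hG0
  · rw [hG0, ENNReal.zero_rpow_of_pos ht0, mul_zero]; exact zero_le
  have cF : Tendsto (fun n => (∫⁻ x, fn n x) ^ (1-t)) atTop (𝓝 ((∫⁻ x, f x) ^ (1-t))) :=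
    (ENNReal.continuous_rpow_const.tendsto _).comp tF
  have cG : Tendsto (fun n => (∫⁻ y, gn n y) ^ t) atTop (𝓝 ((∫⁻ y, g y) ^ t)) :=
    (ENNReal.continuous_rpow_const.tendsto _).comp tG
  have cprod : Tendsto (fun n => (∫⁻ x, fn n x) ^ (1-t) * (∫⁻ y, gn n y) ^ t) atTop
      (𝓝 ((∫⁻ x, f x) ^ (1-t) * (∫⁻ y, g y) ^ t)) := by
    apply ENNReal.Tendsto.mul cF ?_ cG ?_
    · left; exact fun hc => hF0 (by
        have := ENNReal.rpow_eq_zero_iff.1 hc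
        rcases this with ⟨h1, _⟩ | ⟨h1, h2⟩
        · exact h1
        · linarith)
    · left; exact fun hc => hG0 (by
        have := ENNReal.rpow_eq_zero_iff.1 hc
        rcases this with ⟨h1, _⟩ | ⟨h1, h2⟩
        · exact h1
        · linarith)
  exact le_of_tendsto cprod (Eventually.of_forall claim)

section equivtransfer

variable {α β : Type*}

lemma equiv_image_add [Add α] [Add β] (e : α → β) (hadd : ∀ x y, e (x + y) = e x + e y)
    (S T : Set α) : e '' (S + T) = e '' S + e '' T := by
  ext z
  constructor
  · rintro ⟨w, ⟨u, hu, v, hv, rfl⟩, rfl⟩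
    exact ⟨e u, Set.mem_image_of_mem _ hu, e v, Set.mem_image_of_mem _ hv, (hadd u v).symm⟩
  · rintro ⟨_, ⟨u, hu, rfl⟩, _, ⟨v, hv, rfl⟩, rfl⟩
    exact ⟨u + v, Set.add_mem_add hu hv, hadd u v⟩

lemma equiv_image_smul [SMul ℝ α] [SMul ℝ β] (e : α → β) (c : ℝ)
    (hsmul : ∀ x, e (c • x) = c • e x) (S : Set α) : e '' (c • S) = c • (e '' S) := by
  ext z
  constructor
  · rintro ⟨w, ⟨u, hu, rfl⟩, rfl⟩
    exact ⟨e u, Set.mem_image_of_mem _ hu, (hsmul u).symm⟩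
  · rintro ⟨_, ⟨u, hu, rfl⟩, rfl⟩
    exact ⟨c • u, Set.smul_mem_smul_set hu, hsmul u⟩

end equivtransfer

-- multiplicative Brunn-Minkowski in (Fin n → ℝ)
theorem BM_mult : ∀ n : ℕ, ∀ t : ℝ, t ∈ Set.Ioo (0:ℝ) 1 →
    ∀ A B : Set (Fin n → ℝ), IsCompact A → IsCompact B → A.Nonempty → B.Nonempty →
    (volume A) ^ (1-t) * (volume B) ^ t ≤ volume ((1-t) • A + t • B) := by
  intro n
  induction n with
  | zero =>
    intro t ht A B hA hB hA0 hB0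
    have hPA : A = Set.univ := hA0.eq_univ
    have hPB : B = Set.univ := hB0.eq_univ
    have hsum : (1-t) • A + t • B = Set.univ :=
      (Set.add_nonempty.2 ⟨hA0.smul_set, hB0.smul_set⟩).eq_univ
    have huniv : volume (Set.univ : Set (Fin 0 → ℝ)) = 1 := by
      rw [volume_pi, Measure.pi_univ]
      simp
    rw [hsum, hPA, hPB, huniv]
    simp
  | succ n ih =>
    intro t ht A B hA hB hA0 hB0
    obtain ⟨ht0, ht1⟩ := ht
    have h1t : (0:ℝ) < 1 - t := by linarith
    set e := MeasurableEquiv.piFinSuccAbove (fun _ : Fin (n+1) => ℝ) 0 with he_def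
    have hmp : MeasurePreserving e volume volume :=
      volume_preserving_piFinSuccAbove (fun _ : Fin (n+1) => ℝ) 0
    have hcont : Continuous (⇑e) := by
      simp only [he_def, MeasurableEquiv.coe_mk]
      exact (continuous_apply _).prodMk (continuous_pi fun j => continuous_apply _)
    have hconts : Continuous (⇑e.symm) := by
      have : Continuous fun p : ℝ × (Fin n → ℝ) => (Fin.insertNth 0 p.1 p.2 : Fin (n+1) → ℝ) := by
        refine continuous_pi fun j => ?_
        rcases Fin.eq_zero_or_eq_succ j with rfl | ⟨k, rfl⟩
        · simpa using continuous_fst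
        · exact (continuous_apply k).comp continuous_snd
      exact this.congr fun p => rfl
    have hadd : ∀ x y : Fin (n+1) → ℝ, e (x + y) = e x + e y := fun x y => rfl
    have hsmul1 : ∀ x : Fin (n+1) → ℝ, e ((1-t) • x) = (1-t) • e x := fun x => rfl
    have hsmul2 : ∀ x : Fin (n+1) → ℝ, e (t • x) = t • e x := fun x => rfl
    -- images
    set A' : Set (ℝ × (Fin n → ℝ)) := e '' A with hA'_def
    set B' : Set (ℝ × (Fin n → ℝ)) := e '' B with hB'_def
    have hA'c : IsCompact A' := hA.image hcont
    have hB'c : IsCompact B' := hB.image hcont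
    have hA'0 : A'.Nonempty := hA0.image e
    have hB'0 : B'.Nonempty := hB0.image e
    set C' : Set (ℝ × (Fin n → ℝ)) := (1-t) • A' + t • B' with hC'_def
    have smul_compact : ∀ (c : ℝ) (S : Set (ℝ × (Fin n → ℝ))), IsCompact S → IsCompact (c • S) := by
      intro c S hS
      rw [← Set.image_smul]
      exact hS.image (continuous_const_smul c)
    have hC'c : IsCompact C' :=
      (smul_compact _ _ hA'c).add (smul_compact _ _ hB'c)
    have hA'm : MeasurableSet A' := hA'c.isClosed.measurableSet
    have hB'm : MeasurableSet B' := hB'c.isClosed.measurableSet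
    have hC'm : MeasurableSet C' := hC'c.isClosed.measurableSet
    -- slice functions
    set fA : ℝ → ℝ≥0∞ := fun r => volume (Prod.mk r ⁻¹' A') with hfA_def
    set fB : ℝ → ℝ≥0∞ := fun r => volume (Prod.mk r ⁻¹' B') with hfB_def
    set fC : ℝ → ℝ≥0∞ := fun r => volume (Prod.mk r ⁻¹' C') with hfC_def
    have hfAm : Measurable fA := measurable_measure_prodMk_left hA'm
    have hfBm : Measurable fB := measurable_measure_prodMk_left hB'm
    have hfCm : Measurable fC := measurable_measure_prodMk_left hC'm
    -- Fubini
    have fub : ∀ S : Set (ℝ × (Fin n → ℝ)), MeasurableSet S →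
        volume S = ∫⁻ r, volume (Prod.mk r ⁻¹' S) := by
      intro S hS
      rw [show (volume : Measure (ℝ × (Fin n → ℝ))) = (volume : Measure ℝ).prod volume from rfl,
        Measure.prod_apply hS]
    -- compactness of slices
    have slice_compact : ∀ (S : Set (ℝ × (Fin n → ℝ))), IsCompact S → ∀ r : ℝ,
        IsCompact (Prod.mk r ⁻¹' S) := by
      intro S hS r
      apply IsCompact.of_isClosed_subset (hS.image continuous_snd)
        (IsClosed.preimage (Continuous.prodMk_right r) hS.isClosed)
      intro x hx
      exact ⟨(r, x), hx, rfl⟩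
    -- PL hypothesis
    have hyp : ∀ x y : ℝ, fA x ^ (1-t) * fB y ^ t ≤ fC ((1-t) * x + t * y) := by
      intro x y
      rcases Set.eq_empty_or_nonempty (Prod.mk x ⁻¹' A') with hAx | hAx
      · rw [hfA_def]
        simp only [hAx, measure_empty]
        rw [ENNReal.zero_rpow_of_pos h1t, zero_mul]
        exact zero_le
      rcases Set.eq_empty_or_nonempty (Prod.mk y ⁻¹' B') with hBy | hBy
      · rw [hfB_def]
        simp only [hBy, measure_empty]
        rw [ENNReal.zero_rpow_of_pos ht0, mul_zero]
        exact zero_le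
      have := ih t ⟨ht0, ht1⟩ _ _ (slice_compact _ hA'c x) (slice_compact _ hB'c y) hAx hBy
      refine le_trans this (measure_mono ?_)
      rintro _ ⟨_, ⟨u, hu, rfl⟩, _, ⟨v, hv, rfl⟩, rfl⟩
      refine ⟨(1-t) • (x, u), Set.smul_mem_smul_set hu, t • (y, v), Set.smul_mem_smul_set hv, ?_⟩
      show ((1-t) * x + t * y, (1-t) • u + t • v) = (1-t) • (x, u) + t • (y, v)
      rfl
    -- conclude via PL in dimension 1
    have key := PL_dim1 ⟨ht0, ht1⟩ fA fB fC hfAm hfBm hfCm hyp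
    rw [← fub A' hA'm, ← fub B' hB'm, ← fub C' hC'm] at key
    -- transfer back along e
    have himA : volume A' = volume A := by
      rw [hA'_def, MeasurableEquiv.image_eq_preimage_symm]
      exact (MeasurePreserving.symm e hmp).measure_preimage hA.isClosed.measurableSet.nullMeasurableSet
    have himB : volume B' = volume B := by
      rw [hB'_def, MeasurableEquiv.image_eq_preimage_symm]
      exact (MeasurePreserving.symm e hmp).measure_preimage hB.isClosed.measurableSet.nullMeasurableSet
    have himC : volume C' = volume ((1-t) • A + t • B) := by
      have : C' = e '' ((1-t) • A + t • B) := by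
        rw [hC'_def, hA'_def, hB'_def, ← equiv_image_smul (⇑e) (1-t) hsmul1, ← equiv_image_smul (⇑e) t hsmul2,
          ← equiv_image_add (⇑e) hadd]
      rw [this, MeasurableEquiv.image_eq_preimage_symm]
      have hcomp : IsCompact ((1-t) • A + t • B) := by
        have sc : ∀ (c : ℝ) (S : Set (Fin (n+1) → ℝ)), IsCompact S → IsCompact (c • S) := by
          intro c S hS
          rw [← Set.image_smul]
          exact hS.image (continuous_const_smul c)
        exact (sc _ _ hA).add (sc _ _ hB)
      exact (MeasurePreserving.symm e hmp).measure_preimage hcomp.isClosed.measurableSet.nullMeasurableSet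
    rw [himA, himB, himC] at key
    exact key

-- multiplicative BM on Euclidean space
lemma BM_mult_E (n : ℕ) {t : ℝ} (ht : t ∈ Set.Ioo (0:ℝ) 1)
    {A B : Set (E n)} (hA : IsCompact A) (hB : IsCompact B)
    (hA0 : A.Nonempty) (hB0 : B.Nonempty) :
    (volume A) ^ (1-t) * (volume B) ^ t ≤ volume ((1-t) • A + t • B) := by
  set e := (MeasurableEquiv.toLp 2 (Fin n → ℝ)).symm with he_def
  have hmp : MeasurePreserving (⇑e) volume volume :=
    EuclideanSpace.volume_preserving_symm_measurableEquiv_toLp (Fin n)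
  have hcont : Continuous (⇑e) := by
    have : Continuous fun x : E n => (x : Fin n → ℝ) := by
      exact continuous_pi fun i => (continuous_apply i).comp (PiLp.continuous_ofLp 2 _)
    exact this
  have hadd : ∀ x y : E n, e (x + y) = e x + e y := fun x y => rfl
  have hsmul : ∀ (c : ℝ) (x : E n), e (c • x) = c • e x := fun c x => rfl
  have him : ∀ S : Set (E n), IsCompact S → volume (e '' S) = volume S := by
    intro S hS
    rw [MeasurableEquiv.image_eq_preimage_symm]
    exact (MeasurePreserving.symm e hmp).measure_preimage
      hS.isClosed.measurableSet.nullMeasurableSet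
  have key := BM_mult n t ht (e '' A) (e '' B) (hA.image hcont) (hB.image hcont)
    (hA0.image e) (hB0.image e)
  rw [him A hA, him B hB] at key
  have hsum : (1-t) • (⇑e '' A) + t • (⇑e '' B) = e '' ((1-t) • A + t • B) := by
    rw [equiv_image_add (⇑e) hadd, equiv_image_smul (⇑e) (1-t) (hsmul (1-t)),
      equiv_image_smul (⇑e) t (hsmul t)]
  rw [hsum] at key
  have smul_compact : ∀ (c : ℝ) (S : Set (E n)), IsCompact S → IsCompact (c • S) := by
    intro c S hS
    rw [← Set.image_smul]
    exact hS.image (continuous_const_smul c)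
  rwa [him _ ((smul_compact _ _ hA).add (smul_compact _ _ hB))] at key

lemma volume_smul_E {n : ℕ} {c : ℝ} (hc : 0 ≤ c) (S : Set (E n)) :
    volume (c • S) = ENNReal.ofReal (c ^ n) * volume S := by
  rw [Measure.addHaar_smul_of_nonneg volume hc S, finrank_euclideanSpace_fin]

lemma volume_translate_E {n : ℕ} (a : E n) (S : Set (E n)) :
    volume ((fun x => a + x) '' S) = volume S := by
  rw [show (fun x => a + x) '' S = a +ᵥ S from by rw [← Set.image_vadd]; rfl, measure_vadd]

-- additive Brunn-Minkowski on Euclidean space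
lemma BM_add {n : ℕ} (hn : 1 ≤ n) {A B : Set (E n)} (hA : IsCompact A) (hB : IsCompact B)
    (hA0 : A.Nonempty) (hB0 : B.Nonempty) :
    (volume A).toReal ^ (1/(n:ℝ)) + (volume B).toReal ^ (1/(n:ℝ))
      ≤ (volume (A + B)).toReal ^ (1/(n:ℝ)) := by
  have hnpos : (0:ℝ) < n := by exact_mod_cast hn
  have hn0 : n ≠ 0 := by omega
  set va : ℝ := (volume A).toReal with hva_def
  set vb : ℝ := (volume B).toReal with hvb_def
  have hva0 : 0 ≤ va := ENNReal.toReal_nonneg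
  have hvb0 : 0 ≤ vb := ENNReal.toReal_nonneg
  have hAfin : volume A ≠ ∞ := hA.measure_lt_top.ne
  have hBfin : volume B ≠ ∞ := hB.measure_lt_top.ne
  have hABc : IsCompact (A + B) := hA.add hB
  have hABfin : volume (A + B) ≠ ∞ := hABc.measure_lt_top.ne
  -- monotonicity bounds via translation
  obtain ⟨a0, ha0⟩ := hA0
  obtain ⟨b0, hb0⟩ := hB0
  have hmonoB : volume B ≤ volume (A + B) := by
    rw [← volume_translate_E a0 B]
    exact measure_mono (by rintro _ ⟨y, hy, rfl⟩; exact Set.add_mem_add ha0 hy)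
  have hmonoA : volume A ≤ volume (A + B) := by
    rw [← volume_translate_E b0 A]
    apply measure_mono
    rintro _ ⟨x, hx, rfl⟩
    show b0 + x ∈ A + B
    rw [add_comm b0 x]
    exact Set.add_mem_add hx hb0
  rcases eq_or_lt_of_le hva0 with hva | hva
  · rw [← hva, Real.zero_rpow (by positivity), zero_add]
    exact Real.rpow_le_rpow hvb0 (ENNReal.toReal_mono hABfin hmonoB) (by positivity)
  rcases eq_or_lt_of_le hvb0 with hvb | hvb
  · rw [← hvb, Real.zero_rpow (by positivity), add_zero]
    exact Real.rpow_le_rpow hva0 (ENNReal.toReal_mono hABfin hmonoA) (by positivity)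
  -- main case
  set α : ℝ := va ^ (1/(n:ℝ)) with hα_def
  set β : ℝ := vb ^ (1/(n:ℝ)) with hβ_def
  have hα : 0 < α := Real.rpow_pos_of_pos hva _
  have hβ : 0 < β := Real.rpow_pos_of_pos hvb _
  have hαβ : 0 < α + β := by linarith
  set t : ℝ := β / (α + β) with ht_def
  have ht0 : 0 < t := div_pos hβ hαβ
  have ht1 : t < 1 := by
    rw [ht_def, div_lt_one hαβ]; linarith
  have h1t : 1 - t = α / (α + β) := by
    field_simp [ht_def]; rw [ht_def]; field_simp; ring
  have hαpow : α ^ n = va := by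
    rw [hα_def, one_div, Real.rpow_inv_natCast_pow hva0 hn0]
  have hβpow : β ^ n = vb := by
    rw [hβ_def, one_div, Real.rpow_inv_natCast_pow hvb0 hn0]
  -- scaled sets
  set A' : Set (E n) := α⁻¹ • A with hA'_def
  set B' : Set (E n) := β⁻¹ • B with hB'_def
  have smul_compact : ∀ (c : ℝ) (S : Set (E n)), IsCompact S → IsCompact (c • S) := by
    intro c S hS
    rw [← Set.image_smul]
    exact hS.image (continuous_const_smul c)
  have hvolA' : volume A' = 1 := by
    rw [hA'_def, volume_smul_E (by positivity), ← ENNReal.ofReal_toReal hAfin, ← hva_def,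
      ← ENNReal.ofReal_mul (by positivity)]
    rw [inv_pow, ← hαpow]
    rw [inv_mul_cancel₀ (by positivity)]
    simp
  have hvolB' : volume B' = 1 := by
    rw [hB'_def, volume_smul_E (by positivity), ← ENNReal.ofReal_toReal hBfin, ← hvb_def,
      ← ENNReal.ofReal_mul (by positivity)]
    rw [inv_pow, ← hβpow]
    rw [inv_mul_cancel₀ (by positivity)]
    simp
  have key := BM_mult_E n (A := A') (B := B') ⟨ht0, ht1⟩ (smul_compact _ _ hA)
    (smul_compact _ _ hB) ⟨α⁻¹ • a0, Set.smul_mem_smul_set ha0⟩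
    ⟨β⁻¹ • b0, Set.smul_mem_smul_set hb0⟩
  rw [hvolA', hvolB'] at key
  simp only [ENNReal.one_rpow, mul_one] at key
  -- identify the combination set
  have hcomb : (1-t) • A' + t • B' = (α+β)⁻¹ • (A + B) := by
    have e1 : (1-t) • A' = (α+β)⁻¹ • A := by
      rw [hA'_def, ← smul_assoc, h1t]
      congr 1
      show (α / (α + β)) * α⁻¹ = (α+β)⁻¹
      field_simp
    have e2 : t • B' = (α+β)⁻¹ • B := by
      rw [hB'_def, ← smul_assoc, ht_def]
      congr 1
      show (β / (α + β)) * β⁻¹ = (α+β)⁻¹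
      field_simp
    rw [e1, e2]
    have himg := equiv_image_add (fun x : E n => (α+β)⁻¹ • x) (fun x y => smul_add _ x y) A B
    simp only [Set.image_smul] at himg
    exact himg.symm
  rw [hcomb, volume_smul_E (by positivity)] at key
  -- extract the real inequality
  have hvab : 1 ≤ ((α+β)⁻¹)^n * (volume (A+B)).toReal := by
    have := ENNReal.toReal_mono (by
        exact ENNReal.mul_ne_top ENNReal.ofReal_ne_top hABfin) key
    rwa [ENNReal.toReal_mul, ENNReal.toReal_ofReal (by positivity), ENNReal.toReal_one] at this
  have hfinal : (α+β)^n ≤ (volume (A+B)).toReal := by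
    have h2 : ((α+β)⁻¹)^n * (volume (A+B)).toReal = (volume (A+B)).toReal / (α+β)^n := by
      rw [inv_pow]; ring
    rw [h2, le_div_iff₀ (by positivity), one_mul] at hvab
    linarith
  calc α + β = ((α+β)^n) ^ (1/(n:ℝ)) := by
        rw [one_div, ← Real.rpow_natCast (α+β) n, ← Real.rpow_mul hαβ.le]
        rw [mul_inv_cancel₀ (by positivity), Real.rpow_one]
    _ ≤ (volume (A + B)).toReal ^ (1/(n:ℝ)) :=
        Real.rpow_le_rpow (by positivity) hfinal (by positivity)

lemma div_le_div_of_nonneg_right' {x y c : ℝ} (h : x ≤ y) (hc : 0 < c) : x / c ≤ y / c :=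
  by apply div_le_div_of_nonneg_right h hc.le

theorem stmt3 (n : ℕ) (hn : 1 ≤ n) (K L : Set (E n))
    (hK : IsCompact K) (hKc : Convex ℝ K) (hKi : (interior K).Nonempty)
    (hL : IsCompact L) (hLc : Convex ℝ L) (hLi : (interior L).Nonempty)
    (V1 : ℝ)
    (hV1 : Tendsto (fun ε : ℝ => (vol (K + ε • L) - vol K) / ε) (𝓝[>] 0)
      (𝓝 ((n : ℝ) * V1))) :
    V1 ≥ vol K ^ ((n - 1 : ℝ) / n) * vol L ^ (1 / (n : ℝ)) := by
  have hn0 : n ≠ 0 := by omega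
  have hnpos : (0:ℝ) < n := by exact_mod_cast hn
  set a : ℝ := vol K with ha_def
  set b : ℝ := vol L with hb_def
  have hK0 : K.Nonempty := hKi.mono interior_subset
  have hL0 : L.Nonempty := hLi.mono interior_subset
  have hKfin : volume K ≠ ∞ := hK.measure_lt_top.ne
  have hLfin : volume L ≠ ∞ := hL.measure_lt_top.ne
  have ha : 0 < a := ENNReal.toReal_pos
    (Measure.measure_pos_of_nonempty_interior volume hKi).ne' hKfin
  have hb : 0 < b := ENNReal.toReal_pos
    (Measure.measure_pos_of_nonempty_interior volume hLi).ne' hLfin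
  set α : ℝ := a ^ (1/(n:ℝ)) with hα_def
  set β : ℝ := b ^ (1/(n:ℝ)) with hβ_def
  have hα : 0 < α := Real.rpow_pos_of_pos ha _
  have hβ : 0 < β := Real.rpow_pos_of_pos hb _
  have hαpow : α ^ n = a := by
    rw [hα_def, one_div, Real.rpow_inv_natCast_pow ha.le hn0]
  -- the comparison function
  set ψ : ℝ → ℝ := fun x => (α + x * β) ^ n with hψ_def
  have hψ0 : ψ 0 = a := by simp [hψ_def, hαpow]
  have hderiv : HasDerivAt ψ ((n:ℝ) * α ^ (n-1) * β) 0 := by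
    have h1 : HasDerivAt (fun x : ℝ => α + x * β) β 0 := by
      simpa using ((hasDerivAt_id (0:ℝ)).mul_const β).const_add α
    have h2 := h1.fun_pow n
    simpa using h2
  -- slope of ψ tends to the derivative
  have hslope : Tendsto (fun ε : ℝ => (ψ ε - ψ 0) / ε) (𝓝[>] 0)
      (𝓝 ((n:ℝ) * α ^ (n-1) * β)) := by
    have := hasDerivAt_iff_tendsto_slope.1 hderiv
    have h2 : Tendsto (slope ψ 0) (𝓝[>] 0) (𝓝 ((n:ℝ) * α ^ (n-1) * β)) :=
      this.mono_left (nhdsWithin_mono 0 fun x hx => ne_of_gt hx)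
    apply h2.congr'
    filter_upwards [self_mem_nhdsWithin] with ε hε
    rw [slope_def_field]
    rw [sub_zero]
  -- eventual inequality from Brunn-Minkowski
  have hcompare : ∀ ε : ℝ, 0 < ε →
      (ψ ε - ψ 0) / ε ≤ (vol (K + ε • L) - vol K) / ε := by
    intro ε hε
    have hεL : IsCompact (ε • L) := by
      rw [← Set.image_smul]
      exact hL.image (continuous_const_smul ε)
    have hsum_c : IsCompact (K + ε • L) := hK.add hεL
    have hvolεL : (volume (ε • L)).toReal = ε ^ n * b := by
      rw [volume_smul_E hε.le, ENNReal.toReal_mul, ENNReal.toReal_ofReal (by positivity)]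
      rfl
    have hBM := BM_add hn hK hεL hK0 ⟨ε • hL0.choose, Set.smul_mem_smul_set hL0.choose_spec⟩
    rw [hvolεL] at hBM
    have hεβ : (ε ^ n * b) ^ (1/(n:ℝ)) = ε * β := by
      rw [Real.mul_rpow (by positivity) hb.le, hβ_def, one_div,
        Real.pow_rpow_inv_natCast hε.le hn0]
    rw [hεβ] at hBM
    have hnum : ψ ε ≤ vol (K + ε • L) := by
      have h2 : (α + ε * β) ^ n ≤ ((volume (K + ε • L)).toReal ^ (1/(n:ℝ))) ^ n :=
        pow_le_pow_left₀ (by positivity) hBM n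
      rwa [one_div, Real.rpow_inv_natCast_pow ENNReal.toReal_nonneg hn0] at h2
    rw [hψ0]
    have hsub : ψ ε - a ≤ vol (K + ε • L) - a := sub_le_sub_right hnum _
    exact div_le_div_of_nonneg_right' hsub hε
  -- pass to the limit
  have hfinal : (n:ℝ) * α ^ (n-1) * β ≤ (n:ℝ) * V1 := by
    apply le_of_tendsto_of_tendsto hslope hV1
    filter_upwards [self_mem_nhdsWithin] with ε hε
    exact hcompare ε hε
  have hpow : α ^ (n-1) = a ^ ((n - 1 : ℝ) / n) := by
    rw [hα_def, ← Real.rpow_natCast (a ^ (1/(n:ℝ))) (n-1), ← Real.rpow_mul ha.le]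
    congr 1
    rw [Nat.cast_sub hn, Nat.cast_one]
    field_simp
  rw [hpow] at hfinal
  rw [ge_iff_le, ← hα_def, ← hβ_def] at *
  have := le_of_mul_le_mul_left (by linarith [hfinal] : (n:ℝ) * (a ^ ((n - 1 : ℝ) / n) * β) ≤ (n:ℝ) * V1) hnpos
  exact this

end BMaux
end
end
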